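/- For every integer t ≥ 2, the class of F¹_{t,t}-free finite bipartite graphs admits an implicit representation. -/

import Mathlib

open SimpleGraph

/-- `F¹_{t,p}`: the disjoint union of two stars `K_{1,t}` and `K_{1,p}` with both
centers (`inl 0` and `inl 1`) in the same part of the bipartition. -/
def F1tp (t p : ℕ) : SimpleGraph (Fin 2 ⊕ Fin (t + p)) :=
  SimpleGraph.fromRel fun u v =>
    match u, v with
    | Sum.inl a, Sum.inr b => (a = 0 ∧ (b : ℕ) < t) ∨ (a = 1 ∧ t ≤ (b : ℕ))
    | _, _ => False

/-- A class of finite simple graphs, given by its members on the concrete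
vertex sets `Fin n`. -/
abbrev GraphClass : Type := ∀ n : ℕ, SimpleGraph (Fin n) → Prop

/-- A class `C` admits an implicit representation. -/
def AdmitsImplicit (C : GraphClass) : Prop :=
  ∃ (c : ℕ) (D : ℕ → ℕ → Prop),
    ∀ n : ℕ, 2 ≤ n → ∀ G : SimpleGraph (Fin n), C n G →
      ∃ ℓ : Fin n → Fin (n ^ c), Function.Injective ℓ ∧
        ∀ u v : Fin n, u ≠ v → (G.Adj u v ↔ D (ℓ u).val (ℓ v).val)


open Finset
open scoped Classical

namespace St7

/-- fold a list of naturals into one natural number via `Nat.pair`. -/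
def pl : List ℕ → ℕ
  | [] => 0
  | x :: l => Nat.pair x (pl l)

/-- unfold `a` components. -/
def unpl : ℕ → ℕ → List ℕ
  | 0, _ => []
  | a + 1, m => (Nat.unpair m).1 :: unpl a (Nat.unpair m).2

lemma unpl_pl : ∀ l : List ℕ, unpl l.length (pl l) = l
  | [] => rfl
  | x :: l => by
    simp [unpl, pl, Nat.unpair_pair, unpl_pl l]

lemma pair_lt (a b : ℕ) : Nat.pair a b < (a + b + 1) ^ 2 := by
  unfold Nat.pair
  split <;> nlinarith

lemma pl_lt (M : ℕ) (hM : 2 ≤ M) : ∀ l : List ℕ, (∀ x ∈ l, x < M) → pl l < M ^ 4 ^ l.length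
  | [], _ => by
    have : 0 < M := by omega
    simpa [pl] using this
  | x :: l, h => by
    have hx : x < M := h x (by simp)
    have ih := pl_lt M hM l (fun y hy => h y (by simp [hy]))
    have hQ : 2 ≤ M ^ 4 ^ l.length := le_trans hM (Nat.le_self_pow (by positivity) M)
    have h1 : x + pl l + 1 ≤ M * M ^ 4 ^ l.length := by nlinarith
    have h2 : pl (x :: l) < (x + pl l + 1) ^ 2 := pair_lt x (pl l)
    have h3 : (M * M ^ 4 ^ l.length) ^ 2 ≤ M ^ 4 ^ (x :: l).length := by
      have : (M * M ^ 4 ^ l.length) ^ 2 = M ^ (2 * 4 ^ l.length + 2) := by ring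
      rw [this]
      apply Nat.pow_le_pow_right (by omega)
      have h4 : 1 ≤ 4 ^ l.length := Nat.one_le_pow _ _ (by omega)
      simp [List.length_cons, pow_succ]
      omega
    calc pl (x :: l) < (x + pl l + 1) ^ 2 := h2
      _ ≤ (M * M ^ 4 ^ l.length) ^ 2 := Nat.pow_le_pow_left h1 2
      _ ≤ M ^ 4 ^ (x :: l).length := h3

variable {n : ℕ}

/-- Encode a finset of `Fin n` (of size ≤ A) as a natural number. -/
def encL (A : ℕ) (L : Finset (Fin n)) : ℕ :=
  pl ((List.map (fun x : Fin n => x.val + 1) (L.sort (· ≤ ·))) ++ List.replicate (A - L.card) 0)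

lemma unpl_pl' (l : List ℕ) (A : ℕ) (h : l.length = A) : unpl A (pl l) = l :=
  h ▸ unpl_pl l

lemma encL_list_len (A : ℕ) (L : Finset (Fin n)) (hA : L.card ≤ A) :
    ((List.map (fun x : Fin n => x.val + 1) (L.sort (· ≤ ·))) ++ List.replicate (A - L.card) 0).length = A := by
  simp only [List.length_append, List.length_map, Finset.length_sort, List.length_replicate]
  omega

lemma mem_encL (A : ℕ) (L : Finset (Fin n)) (hA : L.card ≤ A) (v : Fin n) :
    ((v.val + 1) ∈ unpl A (encL A L)) ↔ v ∈ L := by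
  rw [encL, unpl_pl' _ A (encL_list_len A L hA)]
  simp only [List.mem_append, List.mem_map, List.mem_replicate, Finset.mem_sort]
  constructor
  · rintro (⟨a, ha, haa⟩ | ⟨-, h0⟩)
    · have hav : a = v := Fin.ext (by omega)
      exact hav ▸ ha
    · omega
  · intro hv
    exact Or.inl ⟨v, hv, rfl⟩

lemma encL_lt (hn : 1 ≤ n) (A : ℕ) (L : Finset (Fin n)) (hA : L.card ≤ A) :
    encL A L < (n + 1) ^ 4 ^ A := by
  rw [encL]
  have := pl_lt (n + 1) (by omega)
    ((List.map (fun x : Fin n => x.val + 1) (L.sort (· ≤ ·))) ++ List.replicate (A - L.card) 0) ?_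
  · rwa [encL_list_len A L hA] at this
  · intro x hx
    simp only [List.mem_append, List.mem_map, List.mem_replicate] at hx
    rcases hx with ⟨a, -, rfl⟩ | ⟨-, rfl⟩
    · exact Nat.succ_lt_succ a.isLt
    · positivity

section Graph

variable {k : ℕ} (G : SimpleGraph (Fin n)) (col : Fin n → Fin 2)

lemma fin2_eq (a b c : Fin 2) (h1 : a ≠ c) (h2 : b ≠ c) : a = b := by
  fin_omega

/-- cardinal comparison of set differences -/
lemma sdiff_card_le {A B : Finset (Fin n)} (h : A.card ≤ B.card) :
    (A \ B).card ≤ (B \ A).card := by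
  have h1 := Finset.card_sdiff_add_card_inter A B
  have h2 := Finset.card_sdiff_add_card_inter B A
  rw [Finset.inter_comm] at h2
  omega

/-- Elimination lemma: some vertex has small degree or small co-degree. -/
lemma elim_lemma
    (hcol : ∀ {u v : Fin n}, G.Adj u v → col u ≠ col v)
    (hP : ∀ u v : Fin n, col u = col v →
      ((univ.filter (G.Adj u)) \ (univ.filter (G.Adj v))).card ≤ k ∨
      ((univ.filter (G.Adj v)) \ (univ.filter (G.Adj u))).card ≤ k)
    (s : Finset (Fin n)) (hs : s.Nonempty) :
    ∃ v ∈ s, (s.filter (G.Adj v)).card ≤ 2 * k ∨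
      (s.filter (fun u => col u ≠ col v ∧ ¬ G.Adj v u)).card ≤ 2 * k := by
  by_contra hcon
  push_neg at hcon
  -- local neighbourhoods
  set Ns : Fin n → Finset (Fin n) := fun v => s.filter (G.Adj v) with hNs
  -- local version of hP
  have hPs : ∀ u v : Fin n, col u = col v →
      (Ns u \ Ns v).card ≤ k ∨ (Ns v \ Ns u).card ≤ k := by
    intro u v huv
    have hsub : ∀ a b : Fin n, (Ns a \ Ns b) ⊆ (univ.filter (G.Adj a)) \ (univ.filter (G.Adj b)) := by
      intro a b x hx
      simp only [hNs, Finset.mem_sdiff, Finset.mem_filter, Finset.mem_univ, true_and] at hx ⊢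
      exact ⟨hx.1.2, fun h => hx.2 ⟨hx.1.1, h⟩⟩
    rcases hP u v huv with h | h
    · exact Or.inl (le_trans (Finset.card_le_card (hsub u v)) h)
    · exact Or.inr (le_trans (Finset.card_le_card (hsub v u)) h)
  -- smaller-degree vertex has small difference
  have hkey : ∀ u v : Fin n, col u = col v → (Ns v).card ≤ (Ns u).card →
      (Ns v \ Ns u).card ≤ k := by
    intro u v huv hd
    rcases hPs u v huv with h | h
    · exact le_trans (sdiff_card_le hd) h
    · exact h
  obtain ⟨v0, hv0⟩ := hs
  set c0 := col v0 with hc0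
  set X := s.filter (fun x => col x = c0) with hX
  have hXne : X.Nonempty := ⟨v0, by simp [hX, hv0, hc0]⟩
  obtain ⟨x1, hx1X, hx1max⟩ := X.exists_max_image (fun x => (Ns x).card) hXne
  have hx1s : x1 ∈ s := (Finset.mem_filter.mp hx1X).1
  have hcolx1 : col x1 = c0 := (Finset.mem_filter.mp hx1X).2
  set R := s.filter (fun u => col u ≠ col x1 ∧ ¬ G.Adj x1 u) with hR
  have hRcard : 2 * k < R.card := (hcon x1 hx1s).2
  -- every X vertex has at most k neighbours in R
  have keyB : ∀ x, x ∈ X → (R.filter (fun y => G.Adj y x)).card ≤ k := by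
    intro x hxX
    have hxs : x ∈ s := (Finset.mem_filter.mp hxX).1
    have hcolx : col x = c0 := (Finset.mem_filter.mp hxX).2
    have hA : (Ns x \ Ns x1).card ≤ k :=
      hkey x1 x (by rw [hcolx1, hcolx]) (hx1max x hxX)
    refine le_trans (Finset.card_le_card ?_) hA
    intro y hy
    simp only [hR, Finset.mem_filter] at hy
    simp only [hNs, Finset.mem_sdiff, Finset.mem_filter]
    exact ⟨⟨hy.1.1, hy.2.symm⟩, fun hcon2 => hy.1.2.2 hcon2.2⟩
  -- the R side
  have hRne : R.Nonempty := Finset.card_pos.mp (by omega)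
  obtain ⟨y1, hy1R, hy1min⟩ := R.exists_min_image (fun y => (Ns y).card) hRne
  have hy1s : y1 ∈ s := (Finset.mem_filter.mp hy1R).1
  have hy1col : col y1 ≠ col x1 := (Finset.mem_filter.mp hy1R).2.1
  have hdy1 : 2 * k < (Ns y1).card := (hcon y1 hy1s).1
  have keyD : ∀ y, y ∈ R → (Ns y1).card - k ≤ (Ns y1 ∩ Ns y).card := by
    intro y hyR
    have hycol : col y ≠ col x1 := (Finset.mem_filter.mp hyR).2.1
    have hcc : col y = col y1 := fin2_eq _ _ _ hycol hy1col
    have h1 : (Ns y1 \ Ns y).card ≤ k := hkey y y1 (by rw [hcc]) (hy1min y hyR)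
    have h2 := Finset.card_sdiff_add_card_inter (Ns y1) (Ns y)
    omega
  -- double counting
  have hsum1 : R.card * ((Ns y1).card - k) ≤ ∑ y ∈ R, (Ns y1 ∩ Ns y).card := by
    have := Finset.card_nsmul_le_sum R (fun y => (Ns y1 ∩ Ns y).card) ((Ns y1).card - k) keyD
    simpa [smul_eq_mul] using this
  have hswap : ∑ y ∈ R, (Ns y1 ∩ Ns y).card
      = ∑ x ∈ Ns y1, (R.filter (fun y => G.Adj y x)).card := by
    have h1 : ∀ y, Ns y1 ∩ Ns y = (Ns y1).filter (fun x => G.Adj y x) := by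
      intro y
      ext x
      simp only [hNs, Finset.mem_inter, Finset.mem_filter]
      tauto
    calc ∑ y ∈ R, (Ns y1 ∩ Ns y).card
        = ∑ y ∈ R, ∑ x ∈ Ns y1, (if G.Adj y x then 1 else 0) := by
          refine Finset.sum_congr rfl fun y _ => ?_
          rw [h1 y, Finset.card_filter]
      _ = ∑ x ∈ Ns y1, ∑ y ∈ R, (if G.Adj y x then 1 else 0) := Finset.sum_comm
      _ = ∑ x ∈ Ns y1, (R.filter (fun y => G.Adj y x)).card := by
          refine Finset.sum_congr rfl fun x _ => ?_
          rw [Finset.card_filter]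
  have hsum2 : ∑ x ∈ Ns y1, (R.filter (fun y => G.Adj y x)).card ≤ (Ns y1).card * k := by
    have : ∀ x ∈ Ns y1, (R.filter (fun y => G.Adj y x)).card ≤ k := by
      intro x hx
      simp only [hNs, Finset.mem_filter] at hx
      have hcolx : col x = c0 := by
        have h1 : col x ≠ col y1 := (hcol hx.2).symm
        rw [← hcolx1]
        exact fin2_eq (col x) (col x1) (col y1) h1 (fun h => hy1col h.symm)
      exact keyB x (Finset.mem_filter.mpr ⟨hx.1, hcolx⟩)
    have := Finset.sum_le_card_nsmul (Ns y1) _ k this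
    simpa [smul_eq_mul] using this
  -- contradiction
  have hfin : R.card * ((Ns y1).card - k) ≤ (Ns y1).card * k := by
    rw [hswap] at hsum1
    exact le_trans hsum1 hsum2
  set d := (Ns y1).card
  have h2k : (2 * k + 1) * (d - k) ≤ d * k :=
    le_trans (Nat.mul_le_mul_right _ (by omega)) hfin
  obtain ⟨m, hm, hmk⟩ : ∃ m, d = m + k ∧ k + 1 ≤ m := ⟨d - k, by omega, by omega⟩
  rw [hm, Nat.add_sub_cancel] at h2k
  nlinarith

/-- Recursive elimination: build the records. -/
lemma rec_lemma
    (hcol : ∀ {u v : Fin n}, G.Adj u v → col u ≠ col v)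
    (hP : ∀ u v : Fin n, col u = col v →
      ((univ.filter (G.Adj u)) \ (univ.filter (G.Adj v))).card ≤ k ∨
      ((univ.filter (G.Adj v)) \ (univ.filter (G.Adj u))).card ≤ k)
    (s : Finset (Fin n)) :
    ∃ (e : Fin n → ℕ) (fl : Fin n → Bool) (L : Fin n → Finset (Fin n)),
      (∀ v ∈ s, e v < s.card) ∧ Set.InjOn e ↑s ∧ (∀ v ∈ s, (L v).card ≤ 2 * k) ∧
      (∀ u ∈ s, ∀ v ∈ s, e u < e v →
        (G.Adj u v ↔ if fl u then v ∈ L u else (col v ≠ col u ∧ v ∉ L u))) := by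
  induction s using Finset.strongInduction with
  | _ s ih =>
    rcases s.eq_empty_or_nonempty with rfl | hs
    · exact ⟨fun _ => 0, fun _ => true, fun _ => ∅, by simp, by simp, by simp, by simp⟩
    · obtain ⟨w, hws, hw⟩ := elim_lemma G col hcol hP s hs
      obtain ⟨e, fl, L, h1, h2, h3, h4⟩ := ih (s.erase w) (Finset.erase_ssubset hws)
      by_cases hdeg : (s.filter (G.Adj w)).card ≤ 2 * k
      case pos =>
        refine ⟨fun u => if u = w then 0 else e u + 1,
                fun u => if u = w then true else fl u,
                fun u => if u = w then s.filter (G.Adj w) else L u, ?_, ?_, ?_, ?_⟩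
        · intro v hv
          by_cases hvw : v = w
          · simp [hvw, Finset.card_pos.mpr hs]
          · simp only [if_neg hvw]
            have := h1 v (Finset.mem_erase.mpr ⟨hvw, hv⟩)
            have hc := Finset.card_erase_of_mem hws
            omega
        · intro a ha b hb hab
          simp only [Finset.coe_mem] at *
          by_cases haw : a = w <;> by_cases hbw : b = w
          · rw [haw, hbw]
          · simp only [if_pos haw, if_neg hbw] at hab; omega
          · simp only [if_neg haw, if_pos hbw] at hab; omega
          · simp only [if_neg haw, if_neg hbw] at hab
            exact h2 (by simp [Finset.mem_erase, haw, ha])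
              (by simp [Finset.mem_erase, hbw, hb]) (by omega)
        · intro v hv
          by_cases hvw : v = w
          · simpa [hvw] using hdeg
          · simpa [hvw] using h3 v (Finset.mem_erase.mpr ⟨hvw, hv⟩)
        · intro u hu v hv hlt
          have hvw : v ≠ w := by
            intro hvw
            simp [hvw] at hlt
          by_cases huw : u = w
          · simp only [huw, if_pos rfl]
            subst huw
            constructor
            · intro hadj
              exact Finset.mem_filter.mpr ⟨hv, hadj⟩
            · intro hmem
              exact (Finset.mem_filter.mp hmem).2
          · simp only [if_neg huw, if_neg hvw] at hlt ⊢
            exact h4 u (Finset.mem_erase.mpr ⟨huw, hu⟩) v (Finset.mem_erase.mpr ⟨hvw, hv⟩)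
              (by omega)
      case neg =>
        have hcod : (s.filter (fun z => col z ≠ col w ∧ ¬ G.Adj w z)).card ≤ 2 * k := by
          rcases hw with h | h
          · omega
          · exact h
        refine ⟨fun u => if u = w then 0 else e u + 1,
                fun u => if u = w then false else fl u,
                fun u => if u = w then s.filter (fun z => col z ≠ col w ∧ ¬ G.Adj w z) else L u,
                ?_, ?_, ?_, ?_⟩
        · intro v hv
          by_cases hvw : v = w
          · simp [hvw, Finset.card_pos.mpr hs]
          · simp only [if_neg hvw]
            have := h1 v (Finset.mem_erase.mpr ⟨hvw, hv⟩)
            have hc := Finset.card_erase_of_mem hws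
            omega
        · intro a ha b hb hab
          simp only [Finset.coe_mem] at *
          by_cases haw : a = w <;> by_cases hbw : b = w
          · rw [haw, hbw]
          · simp only [if_pos haw, if_neg hbw] at hab; omega
          · simp only [if_neg haw, if_pos hbw] at hab; omega
          · simp only [if_neg haw, if_neg hbw] at hab
            exact h2 (by simp [Finset.mem_erase, haw, ha])
              (by simp [Finset.mem_erase, hbw, hb]) (by omega)
        · intro v hv
          by_cases hvw : v = w
          · simpa [hvw] using hcod
          · simpa [hvw] using h3 v (Finset.mem_erase.mpr ⟨hvw, hv⟩)
        · intro u hu v hv hlt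
          have hvw : v ≠ w := by
            intro hvw
            simp [hvw] at hlt
          by_cases huw : u = w
          · simp only [huw, if_pos rfl, Bool.false_eq_true, if_false]
            subst huw
            constructor
            · intro hadj
              refine ⟨(hcol hadj).symm, ?_⟩
              intro hmem
              exact (Finset.mem_filter.mp hmem).2.2 hadj
            · rintro ⟨hne, hmem⟩
              by_contra hnadj
              exact hmem (Finset.mem_filter.mpr ⟨hv, hne, hnadj⟩)
          · simp only [if_neg huw, if_neg hvw] at hlt ⊢
            exact h4 u (Finset.mem_erase.mpr ⟨huw, hu⟩) v (Finset.mem_erase.mpr ⟨hvw, hv⟩)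
              (by omega)

end Graph

/-- From `F1tp`-freeness derive the same-side neighbourhood condition. -/
lemma P_of_free {n t : ℕ} (ht : 2 ≤ t) (G : SimpleGraph (Fin n)) (col : Fin n → Fin 2)
    (hcol : ∀ {u v : Fin n}, G.Adj u v → col u ≠ col v)
    (hF : ¬ Nonempty (F1tp t t ↪g G)) :
    ∀ u v : Fin n, col u = col v →
      ((univ.filter (G.Adj u)) \ (univ.filter (G.Adj v))).card ≤ t - 1 ∨
      ((univ.filter (G.Adj v)) \ (univ.filter (G.Adj u))).card ≤ t - 1 := by
  intro u v huv
  by_contra hcon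
  push_neg at hcon
  obtain ⟨hA, hB⟩ := hcon
  set A := (univ.filter (G.Adj u)) \ (univ.filter (G.Adj v)) with hAdef
  set B := (univ.filter (G.Adj v)) \ (univ.filter (G.Adj u)) with hBdef
  have hAmem : ∀ x ∈ A, G.Adj u x ∧ ¬ G.Adj v x := by
    intro x hx
    simp only [hAdef, Finset.mem_sdiff, Finset.mem_filter, Finset.mem_univ, true_and] at hx
    exact hx
  have hBmem : ∀ x ∈ B, G.Adj v x ∧ ¬ G.Adj u x := by
    intro x hx
    simp only [hBdef, Finset.mem_sdiff, Finset.mem_filter, Finset.mem_univ, true_and] at hx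
    exact hx
  obtain ⟨A', hA'sub, hA'card⟩ := A.exists_subset_card_eq (show t ≤ A.card by omega)
  obtain ⟨B', hB'sub, hB'card⟩ := B.exists_subset_card_eq (show t ≤ B.card by omega)
  let eA := A'.equivFinOfCardEq hA'card
  let eB := B'.equivFinOfCardEq hB'card
  let la : Fin t → Fin n := fun i => (eA.symm i : Fin n)
  let lb : Fin t → Fin n := fun i => (eB.symm i : Fin n)
  have hlaA : ∀ i, la i ∈ A := fun i => hA'sub (eA.symm i).2
  have hlbB : ∀ i, lb i ∈ B := fun i => hB'sub (eB.symm i).2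
  have hlainj : Function.Injective la := by
    intro i j hij
    have : eA.symm i = eA.symm j := Subtype.ext hij
    exact eA.symm.injective this
  have hlbinj : Function.Injective lb := by
    intro i j hij
    have : eB.symm i = eB.symm j := Subtype.ext hij
    exact eB.symm.injective this
  have huvne : u ≠ v := by
    rintro rfl
    rw [show A = ∅ by simp [hAdef]] at hA
    simp at hA
  have hunadj : ¬ G.Adj u v := fun h => hcol h huv
  have hcolA : ∀ i, col (la i) ≠ col u := fun i => (hcol (hAmem _ (hlaA i)).1).symm
  have hcolB : ∀ i, col (lb i) ≠ col u := by
    intro i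
    have := (hcol (hBmem _ (hlbB i)).1).symm
    rwa [← huv] at this
  have hll : ∀ (x y : Fin n), col x ≠ col u → col y ≠ col u → ¬ G.Adj x y :=
    fun x y hx hy hadj => hcol hadj (fin2_eq _ _ _ hx hy)
  have hlane : ∀ i, la i ≠ u ∧ la i ≠ v := by
    intro i
    constructor
    · exact fun h => (G.irrefl (h ▸ (hAmem _ (hlaA i)).1))
    · exact fun h => (h ▸ hcolA i) huv.symm
  have hlbne : ∀ i, lb i ≠ u ∧ lb i ≠ v := by
    intro i
    constructor
    · exact fun h => (h ▸ hcolB i) rfl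
    · exact fun h => (G.irrefl (h ▸ (hBmem _ (hlbB i)).1))
  have hlalb : ∀ i j, la i ≠ lb j := by
    intro i j h
    exact (hAmem _ (hlaA i)).2 (h ▸ (hBmem _ (hlbB j)).1)
  -- the embedding
  let f : Fin 2 ⊕ Fin (t + t) → Fin n :=
    Sum.elim (fun a => if a = 0 then u else v)
      (fun b => if h : (b : ℕ) < t then la ⟨(b : ℕ), h⟩
                else lb ⟨(b : ℕ) - t, by have := b.isLt; omega⟩)
  have hfinl0 : f (Sum.inl 0) = u := rfl
  have hfinl1 : f (Sum.inl 1) = v := rfl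
  have hfinr_lt : ∀ (b : Fin (t + t)) (h : (b : ℕ) < t), f (Sum.inr b) = la ⟨(b : ℕ), h⟩ := by
    intro b h
    simp only [f, Sum.elim_inr, dif_pos h]
  have hfinr_ge : ∀ (b : Fin (t + t)) (h : ¬ (b : ℕ) < t),
      f (Sum.inr b) = lb ⟨(b : ℕ) - t, by have := b.isLt; omega⟩ := by
    intro b h
    simp only [f, Sum.elim_inr, dif_neg h]
  have hleafcol : ∀ b : Fin (t + t), col (f (Sum.inr b)) ≠ col u := by
    intro b
    by_cases h : (b : ℕ) < t
    · rw [hfinr_lt b h]; exact hcolA _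
    · rw [hfinr_ge b h]; exact hcolB _
  have hleafne : ∀ b : Fin (t + t), f (Sum.inr b) ≠ u ∧ f (Sum.inr b) ≠ v := by
    intro b
    by_cases h : (b : ℕ) < t
    · rw [hfinr_lt b h]; exact hlane _
    · rw [hfinr_ge b h]; exact hlbne _
  have hfinj : Function.Injective f := by
    rintro (a | i) (b | j) hf
    · -- inl inl
      fin_cases a <;> fin_cases b
      · rfl
      · exact absurd hf huvne
      · exact absurd hf.symm huvne
      · rfl
    · -- inl inr
      exfalso
      fin_cases a
      · exact (hleafne j).1 hf.symm
      · exact (hleafne j).2 hf.symm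
    · -- inr inl
      exfalso
      fin_cases b
      · exact (hleafne i).1 hf
      · exact (hleafne i).2 hf
    · -- inr inr
      congr 1
      by_cases hi : (i : ℕ) < t <;> by_cases hj : (j : ℕ) < t
      · rw [hfinr_lt i hi, hfinr_lt j hj] at hf
        have := hlainj hf
        exact Fin.ext (by simpa [Fin.ext_iff] using this)
      · rw [hfinr_lt i hi, hfinr_ge j hj] at hf
        exact absurd hf (hlalb _ _)
      · rw [hfinr_ge i hi, hfinr_lt j hj] at hf
        exact absurd hf.symm (hlalb _ _)
      · rw [hfinr_ge i hi, hfinr_ge j hj] at hf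
        have := hlbinj hf
        have h2 : (i : ℕ) - t = (j : ℕ) - t := by simpa [Fin.ext_iff] using this
        have hii := i.isLt
        have hjj := j.isLt
        exact Fin.ext (by omega)
  -- adjacency characterisation
  have hmap : ∀ a b : Fin 2 ⊕ Fin (t + t), G.Adj (f a) (f b) ↔ (F1tp t t).Adj a b := by
    have hradj : ∀ (a : Fin 2) (j : Fin (t + t)),
        (F1tp t t).Adj (Sum.inl a) (Sum.inr j) ↔ ((a = 0 ∧ (j : ℕ) < t) ∨ (a = 1 ∧ t ≤ (j : ℕ))) := by
      intro a j
      rw [F1tp, SimpleGraph.fromRel_adj]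
      simp
    have fin2cases : ∀ a : Fin 2, a = 0 ∨ a = 1 := by decide
    rintro (a | i) (b | j)
    · -- inl inl : both sides false
      rw [F1tp, SimpleGraph.fromRel_adj]
      simp only [reduceCtorEq, ne_eq]
      constructor
      · intro hadj
        exfalso
        fin_cases a <;> fin_cases b
        · exact G.irrefl hadj
        · exact hunadj hadj
        · exact hunadj (hadj.symm)
        · exact G.irrefl hadj
      · rintro ⟨-, h | h⟩ <;> exact h.elim
    · -- inl inr
      rw [hradj a j]
      rcases fin2cases a with rfl | rfl <;> by_cases hj : (j : ℕ) < t
      · rw [hfinl0, hfinr_lt j hj]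
        constructor
        · intro _; exact Or.inl ⟨rfl, hj⟩
        · intro _; exact (hAmem _ (hlaA _)).1
      · rw [hfinl0, hfinr_ge j hj]
        constructor
        · intro hadj
          exact absurd hadj (hBmem _ (hlbB _)).2
        · rintro (⟨-, h⟩ | ⟨h, -⟩)
          · exact absurd h hj
          · exact absurd h (by decide)
      · rw [hfinl1, hfinr_lt j hj]
        constructor
        · intro hadj
          exact absurd hadj (hAmem _ (hlaA _)).2
        · rintro (⟨h, -⟩ | ⟨-, h⟩)
          · exact absurd h (by decide)
          · omega
      · rw [hfinl1, hfinr_ge j hj]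
        constructor
        · intro _; exact Or.inr ⟨rfl, by omega⟩
        · intro _; exact (hBmem _ (hlbB _)).1
    · -- inr inl : use symmetry
      rw [G.adj_comm, (F1tp t t).adj_comm]
      rw [hradj b i]
      rcases fin2cases b with rfl | rfl <;> by_cases hi : (i : ℕ) < t
      · rw [hfinl0, hfinr_lt i hi]
        constructor
        · intro _; exact Or.inl ⟨rfl, hi⟩
        · intro _; exact (hAmem _ (hlaA _)).1
      · rw [hfinl0, hfinr_ge i hi]
        constructor
        · intro hadj
          exact absurd hadj (hBmem _ (hlbB _)).2
        · rintro (⟨-, h⟩ | ⟨h, -⟩)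
          · exact absurd h hi
          · exact absurd h (by decide)
      · rw [hfinl1, hfinr_lt i hi]
        constructor
        · intro hadj
          exact absurd hadj (hAmem _ (hlaA _)).2
        · rintro (⟨h, -⟩ | ⟨-, h⟩)
          · exact absurd h (by decide)
          · omega
      · rw [hfinl1, hfinr_ge i hi]
        constructor
        · intro _; exact Or.inr ⟨rfl, by omega⟩
        · intro _; exact (hBmem _ (hlbB _)).1
    · -- inr inr : both sides false
      rw [F1tp, SimpleGraph.fromRel_adj]
      constructor
      · intro hadj
        exact absurd hadj (hll _ _ (hleafcol i) (hleafcol j))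
      · rintro ⟨-, h | h⟩ <;> exact h.elim
  exact hF ⟨⟨⟨f, hfinj⟩, fun {a b} => hmap a b⟩⟩

end St7

namespace St7

/-- field extraction for the decoder -/
def fld (x i : ℕ) : ℕ := (unpl 5 x).getD i 0

/-- The decoder relation. -/
def DD (t : ℕ) (a b : ℕ) : Prop :=
  if fld a 1 < fld b 1 then
    if fld a 3 = 1 then (fld b 0 + 1) ∈ unpl (2 * t) (fld a 4)
    else ¬ fld a 2 = fld b 2 ∧ (fld b 0 + 1) ∉ unpl (2 * t) (fld a 4)
  else
    if fld b 3 = 1 then (fld a 0 + 1) ∈ unpl (2 * t) (fld b 4)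
    else ¬ fld b 2 = fld a 2 ∧ (fld a 0 + 1) ∉ unpl (2 * t) (fld b 4)

end St7

set_option maxHeartbeats 2000000 in
/-- For `t ≥ 2`, the class of `F¹_{t,t}`-free bipartite graphs admits an implicit
representation. -/
theorem statement7 (t : ℕ) (ht : 2 ≤ t) :
    AdmitsImplicit (fun n G => G.Colorable 2 ∧ ¬ Nonempty (F1tp t t ↪g G)) := by
  classical
  refine ⟨2048 * 4 ^ (2 * t), St7.DD t, ?_⟩
  intro n hn G hG
  obtain ⟨hcolorable, hF⟩ := hG
  obtain ⟨C⟩ := hcolorable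
  set col : Fin n → Fin 2 := fun v => C v with hcoldef
  have hcol : ∀ {u v : Fin n}, G.Adj u v → col u ≠ col v := fun h => C.valid h
  have hP := St7.P_of_free ht G col (fun h => hcol h) hF
  obtain ⟨e, fl, L, h1, h2, h3, h4⟩ :=
    St7.rec_lemma (k := t - 1) G col (fun h => hcol h) hP Finset.univ
  have hen : ∀ v, e v < n := fun v => by simpa using h1 v (Finset.mem_univ v)
  have heinj : Function.Injective e := fun a b hab => h2 (by simp) (by simp) hab
  have hLcard : ∀ v, (L v).card ≤ 2 * t := by
    intro v
    have := h3 v (Finset.mem_univ v)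
    omega
  set E := 4 ^ (2 * t) with hE
  have hEpos : 1 ≤ E := Nat.one_le_pow _ _ (by omega)
  set M := (n + 1) ^ E with hM
  have hM2 : 2 ≤ M := by
    calc 2 ≤ n + 1 := by omega
      _ ≤ (n + 1) ^ E := Nat.le_self_pow (by omega) _
  set ℓ' : Fin n → ℕ := fun v =>
    St7.pl [v.val, e v, (col v).val, (if fl v then 1 else 0), St7.encL (2 * t) (L v)] with hℓ'
  have hdec : ∀ v, St7.unpl 5 (ℓ' v)
      = [v.val, e v, (col v).val, (if fl v then 1 else 0), St7.encL (2 * t) (L v)] := by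
    intro v
    exact St7.unpl_pl' _ 5 rfl
  have hfld0 : ∀ v, St7.fld (ℓ' v) 0 = v.val := fun v => by simp [St7.fld, hdec v]
  have hfld1 : ∀ v, St7.fld (ℓ' v) 1 = e v := fun v => by simp [St7.fld, hdec v]
  have hfld2 : ∀ v, St7.fld (ℓ' v) 2 = (col v).val := fun v => by simp [St7.fld, hdec v]
  have hfld3 : ∀ v, St7.fld (ℓ' v) 3 = (if fl v then 1 else 0) := fun v => by
    simp [St7.fld, hdec v]
  have hfld4 : ∀ v, St7.fld (ℓ' v) 4 = St7.encL (2 * t) (L v) := fun v => by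
    simp [St7.fld, hdec v]
  -- bound on labels
  have hbound : ∀ v, ℓ' v < n ^ (2048 * 4 ^ (2 * t)) := by
    intro v
    have hentries : ∀ x ∈ [v.val, e v, (col v).val, (if fl v then 1 else 0),
        St7.encL (2 * t) (L v)], x < M := by
      intro x hx
      have hnM : n < M := by
        calc n < n + 1 := by omega
          _ ≤ (n + 1) ^ E := Nat.le_self_pow (by omega) _
      simp only [List.mem_cons, List.mem_singleton] at hx
      rcases hx with rfl | rfl | rfl | rfl | rfl | h
      · exact lt_trans v.isLt hnM
      · exact lt_trans (hen v) hnM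
      · exact lt_of_lt_of_le (col v).isLt hM2
      · split <;> omega
      · exact St7.encL_lt (by omega) (2 * t) (L v) (hLcard v)
      · exact absurd h List.not_mem_nil
    have h5 := St7.pl_lt M hM2 _ hentries
    have hlen : ([v.val, e v, (col v).val, (if fl v then 1 else 0),
        St7.encL (2 * t) (L v)]).length = 5 := rfl
    rw [hlen] at h5
    have hchain : M ^ 4 ^ 5 ≤ n ^ (2048 * 4 ^ (2 * t)) := by
      have hn1 : n + 1 ≤ n ^ 2 := by clear * - hn; nlinarith
      calc M ^ 4 ^ 5 = (n + 1) ^ (E * 4 ^ 5) := by rw [hM, ← pow_mul]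
        _ ≤ (n ^ 2) ^ (E * 4 ^ 5) := Nat.pow_le_pow_left hn1 _
        _ = n ^ (2 * (E * 4 ^ 5)) := by rw [← pow_mul]
        _ = n ^ (2048 * 4 ^ (2 * t)) := by rw [hE]; ring_nf
    exact lt_of_lt_of_le h5 hchain
  refine ⟨fun v => ⟨ℓ' v, hbound v⟩, ?_, ?_⟩
  · -- injectivity
    intro a b hab
    have h0 : ℓ' a = ℓ' b := congrArg Fin.val hab
    have := congrArg (St7.unpl 5) h0
    rw [hdec a, hdec b] at this
    exact Fin.ext (by injection this)
  · -- adjacency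
    intro u v huv
    have hne : e u ≠ e v := fun h => huv (heinj h)
    simp only [St7.DD]
    rw [hfld0 u, hfld0 v, hfld1 u, hfld1 v, hfld2 u, hfld2 v, hfld3 u, hfld3 v,
      hfld4 u, hfld4 v]
    have hcv : ∀ a b : Fin n, (¬ (col a).val = (col b).val) ↔ (col b ≠ col a) := by
      intro a b
      rw [Fin.val_inj]
      exact ne_comm
    by_cases he : e u < e v
    · rw [if_pos he]
      have hmain := h4 u (Finset.mem_univ u) v (Finset.mem_univ v) he
      by_cases hflu : fl u
      · rw [if_pos (by rw [if_pos hflu])]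
        rw [St7.mem_encL (2 * t) (L u) (hLcard u) v]
        rw [hmain, if_pos hflu]
      · rw [if_neg (by rw [if_neg hflu]; omega)]
        rw [St7.mem_encL (2 * t) (L u) (hLcard u) v, hcv u v]
        rw [hmain, if_neg hflu]
    · have he' : e v < e u := by omega
      rw [if_neg he]
      have hmain := h4 v (Finset.mem_univ v) u (Finset.mem_univ u) he'
      rw [G.adj_comm]
      by_cases hflv : fl v
      · rw [if_pos (by rw [if_pos hflv])]
        rw [St7.mem_encL (2 * t) (L v) (hLcard v) u]
        rw [hmain, if_pos hflv]
      · rw [if_neg (by rw [if_neg hflv]; omega)]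
        rw [St7.mem_encL (2 * t) (L v) (hLcard v) u, hcv v u]
        rw [hmain, if_neg hflv]
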